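/- The continuous-time system ẋ₁ = c x₁ + u₁, ẋ₂ = d x₂ + (d−2c)x₁² + x₁² u₁ + u₂ lifts exactly under z = θ(x) = (x₁, x₂+x₁², x₁², 1) to the bilinear system ż = A z + B₁ z u₁ + B₂ z u₂ with A = diag(c, d, 2c, 0), B₁ having nonzero entries (1,4)=1, (2,1)=2, (2,3)=1, (3,1)=2, and B₂ having only nonzero entry (2,4)=1: any differentiable solution x(t) yields z(t) = θ(x(t)) solving the bilinear ODE. -/

import Mathlib

open Matrix

/-- Koopman lifting of Example 2. -/
def θex2 : ℝ × ℝ → Fin 4 → ℝ :=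
  fun x => ![x.1, x.2 + x.1 ^ 2, x.1 ^ 2, 1]

def Aex2c (c d : ℝ) : Matrix (Fin 4) (Fin 4) ℝ :=
  Matrix.diagonal ![c, d, 2 * c, 0]

/-- Nonzero entries (1-based): (1,4)=1, (2,1)=2, (2,3)=1, (3,1)=2. -/
def B₁ex2c : Matrix (Fin 4) (Fin 4) ℝ :=
  !![0, 0, 0, 1;
     2, 0, 1, 0;
     2, 0, 0, 0;
     0, 0, 0, 0]

/-- Only nonzero entry (1-based): (2,4)=1. -/
def B₂ex2c : Matrix (Fin 4) (Fin 4) ℝ :=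
  !![0, 0, 0, 0;
     0, 0, 0, 1;
     0, 0, 0, 0;
     0, 0, 0, 0]

/-- Any differentiable solution of `ẋ₁ = c x₁ + u₁`, `ẋ₂ = d x₂ + (d−2c)x₁² + x₁²u₁ + u₂`
lifts under `θ` to a solution of the bilinear system `ż = A z + B₁ z u₁ + B₂ z u₂`. -/
theorem ex2_continuous_bilinear_lift
    (c d : ℝ) (u₁ u₂ : ℝ → ℝ) (x : ℝ → ℝ × ℝ)
    (hx₁ : ∀ t, HasDerivAt (fun s => (x s).1) (c * (x t).1 + u₁ t) t)
    (hx₂ : ∀ t, HasDerivAt (fun s => (x s).2)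
      (d * (x t).2 + (d - 2 * c) * (x t).1 ^ 2 + (x t).1 ^ 2 * u₁ t + u₂ t) t) :
    ∀ t, HasDerivAt (fun s => θex2 (x s))
      ((Aex2c c d).mulVec (θex2 (x t)) + u₁ t • B₁ex2c.mulVec (θex2 (x t))
        + u₂ t • B₂ex2c.mulVec (θex2 (x t))) t := by

  intro t
  rw [hasDerivAt_pi]
  intro i
  have h1 := hx₁ t
  have h2 := hx₂ t
  have hsq : HasDerivAt (fun s => (x s).1 ^ 2)
      (2 * (x t).1 * (c * (x t).1 + u₁ t)) t := by
    simpa [mul_comm, mul_assoc] using (h1.fun_pow 2)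
  fin_cases i <;>
    simp [θex2, Aex2c, B₁ex2c, B₂ex2c, Matrix.mulVec, dotProduct,
      Fin.sum_univ_four, Matrix.diagonal_apply, Matrix.vecHead, Matrix.vecTail]
  · convert h1 using 1
  · convert h2.fun_add hsq using 1; ring
  · exact hsq.congr_deriv (by ring)
  · exact hasDerivAt_const t 1
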